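/- (Improve or localize.) Let f : ℝ^d → ℝ be differentiable and L-gradient Lipschitz with L ≥ 0, let η > 0 with ηL ≤ 1/4, let r ≥ 0 and N ∈ ℕ. Let x_0, …, x_N ∈ ℝ^d and v_0, …, v_{N−1}, ξ_0, …, ξ_{N−1} ∈ ℝ^d satisfy x_{i+1} = x_i − η(v_i − ξ_i) and ‖ξ_i‖ ≤ r for every 0 ≤ i < N. Then for every 0 ≤ J ≤ N, ‖x_J − x_0‖² ≤ 8ηJ · ( f(x_0) − f(x_J) + η ∑_{i=0}^{J−1} ‖v_i − ∇f(x_i)‖² + η J r² ). -/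

import Mathlib

open InnerProductSpace

lemma descent_aux {d : ℕ} {f : EuclideanSpace ℝ (Fin d) → ℝ} {L : ℝ} (hL : 0 ≤ L)
    (hf : Differentiable ℝ f)
    (hlip : ∀ x y : EuclideanSpace ℝ (Fin d),
      ‖gradient f x - gradient f y‖ ≤ L * ‖x - y‖)
    (x y : EuclideanSpace ℝ (Fin d)) :
    f y - f x - (inner ℝ (gradient f x) (y - x) : ℝ) ≤ L * ‖y - x‖ ^ 2 := by
  have hfd : ∀ w, fderiv ℝ f w = toDual ℝ _ (gradient f w) := fun w =>
    (hasGradientAt_iff_hasFDerivAt.mp (hf w).hasGradientAt).fderiv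
  have key : ‖f y - f x - (fderiv ℝ f x) (y - x)‖ ≤ (L * ‖y - x‖) * ‖y - x‖ := by
    apply Convex.norm_image_sub_le_of_norm_fderiv_le' (fun z _ => hf z)
      ?_ (convex_segment x y) (left_mem_segment ℝ x y) (right_mem_segment ℝ x y)
    intro z hz
    obtain ⟨a, b, ha, hb, hab, rfl⟩ := hz
    have hz1 : a • x + b • y - x = b • (y - x) := by
      have : a = 1 - b := by linarith
      subst this
      module
    have h2 : ‖a • x + b • y - x‖ ≤ ‖y - x‖ := by
      rw [hz1, norm_smul, Real.norm_eq_abs, abs_of_nonneg hb]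
      nlinarith [norm_nonneg (y - x)]
    calc ‖fderiv ℝ f (a • x + b • y) - fderiv ℝ f x‖
        = ‖gradient f (a • x + b • y) - gradient f x‖ := by
          rw [hfd, hfd, ← map_sub]
          exact (toDual ℝ (EuclideanSpace ℝ (Fin d))).norm_map _
      _ ≤ L * ‖a • x + b • y - x‖ := hlip _ _
      _ ≤ L * ‖y - x‖ := by nlinarith
  have h3 : (fderiv ℝ f x) (y - x) = (inner ℝ (gradient f x) (y - x) : ℝ) := by
    rw [hfd]; exact toDual_apply_apply
  calc f y - f x - (inner ℝ (gradient f x) (y - x) : ℝ)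
      ≤ ‖f y - f x - (fderiv ℝ f x) (y - x)‖ := by rw [h3] at *; exact le_abs_self _
    _ ≤ (L * ‖y - x‖) * ‖y - x‖ := key
    _ = L * ‖y - x‖ ^ 2 := by ring

set_option maxHeartbeats 1000000 in
/-- "Improve or localize": along the perturbed update
`x_{i+1} = x_i - η (v_i - ξ_i)` with `‖ξ_i‖ ≤ r` and `ηL ≤ 1/4`, for every
`J ≤ N` one has
`‖x_J - x_0‖² ≤ 8ηJ (f x₀ - f x_J + η ∑_{i<J} ‖v_i - ∇f x_i‖² + ηJ r²)`. -/
theorem stmt_3 {d : ℕ} (f : EuclideanSpace ℝ (Fin d) → ℝ) (L : ℝ) (hL : 0 ≤ L)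
    (hf : Differentiable ℝ f)
    (hlip : ∀ x y : EuclideanSpace ℝ (Fin d),
      ‖gradient f x - gradient f y‖ ≤ L * ‖x - y‖)
    (η r : ℝ) (hη : 0 < η) (hηL : η * L ≤ 1 / 4) (hr : 0 ≤ r) (N : ℕ)
    (x v ξ : ℕ → EuclideanSpace ℝ (Fin d))
    (hupd : ∀ i < N, x (i + 1) = x i - η • (v i - ξ i))
    (hξ : ∀ i < N, ‖ξ i‖ ≤ r) :
    ∀ J ≤ N, ‖x J - x 0‖ ^ 2 ≤
      8 * η * J * (f (x 0) - f (x J)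
        + η * ∑ i ∈ Finset.range J, ‖v i - gradient f (x i)‖ ^ 2
        + η * J * r ^ 2) := by
  intro J hJ
  -- per-step bound
  have hstep : ∀ i < N, ‖x (i + 1) - x i‖ ^ 2 ≤
      4 * η * (f (x i) - f (x (i + 1)))
      + 4 * η ^ 2 * (‖v i - gradient f (x i)‖ ^ 2 + r ^ 2) := by
    intro i hi
    have hx : x (i + 1) - x i = -(η • (v i - ξ i)) := by rw [hupd i hi]; abel
    have hdesc := descent_aux hL hf hlip (x i) (x (i + 1))
    rw [hx, inner_neg_right, real_inner_smul_right, norm_neg, norm_smul,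
      Real.norm_eq_abs, abs_of_pos hη] at hdesc
    have hw : v i - gradient f (x i) - ξ i = (v i - ξ i) - gradient f (x i) := by abel
    have hwu : (inner ℝ (v i - gradient f (x i) - ξ i) (v i - ξ i) : ℝ)
        = ‖v i - ξ i‖ ^ 2 - inner ℝ (gradient f (x i)) (v i - ξ i) := by
      rw [hw, inner_sub_left, real_inner_self_eq_norm_sq]
    have hcs : (inner ℝ (v i - gradient f (x i) - ξ i) (v i - ξ i) : ℝ)
        ≤ ‖v i - gradient f (x i) - ξ i‖ * ‖v i - ξ i‖ := real_inner_le_norm _ _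
    have hd2 : ‖v i - gradient f (x i) - ξ i‖ ^ 2
        ≤ 2 * ‖v i - gradient f (x i)‖ ^ 2 + 2 * r ^ 2 := by
      have h1 : ‖v i - gradient f (x i) - ξ i‖ ≤ ‖v i - gradient f (x i)‖ + ‖ξ i‖ :=
        norm_sub_le _ _
      have h2 := hξ i hi
      have h3 := pow_le_pow_left₀ (norm_nonneg _) h1 2
      have h4 := pow_le_pow_left₀ (norm_nonneg _) h2 2
      nlinarith [sq_nonneg (‖v i - gradient f (x i)‖ - ‖ξ i‖)]
    rw [hx, norm_neg, norm_smul, Real.norm_eq_abs, abs_of_pos hη]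
    -- pure real arithmetic now
    set a := ‖v i - ξ i‖ with ha
    set b := ‖v i - gradient f (x i) - ξ i‖ with hb
    set c := ‖v i - gradient f (x i)‖ with hc
    set p := (inner ℝ (gradient f (x i)) (v i - ξ i) : ℝ) with hp
    set q := (inner ℝ (v i - gradient f (x i) - ξ i) (v i - ξ i) : ℝ) with hq
    have ha0 : 0 ≤ a := norm_nonneg _
    have hb0 : 0 ≤ b := norm_nonneg _
    have hLη2 : L * (η * a) ^ 2 ≤ (η / 4) * a ^ 2 := by nlinarith
    nlinarith [mul_nonneg hη.le (sq_nonneg (b - a)), sq_nonneg a]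
  -- sum of squared steps
  have hsum : ∑ i ∈ Finset.range J, ‖x (i + 1) - x i‖ ^ 2 ≤
      4 * η * (f (x 0) - f (x J)
        + η * ∑ i ∈ Finset.range J, ‖v i - gradient f (x i)‖ ^ 2
        + η * J * r ^ 2) := by
    have htel : ∑ i ∈ Finset.range J, (f (x i) - f (x (i + 1))) = f (x 0) - f (x J) :=
      Finset.sum_range_sub' (fun i => f (x i)) J
    calc ∑ i ∈ Finset.range J, ‖x (i + 1) - x i‖ ^ 2
        ≤ ∑ i ∈ Finset.range J, (4 * η * (f (x i) - f (x (i + 1)))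
            + 4 * η ^ 2 * (‖v i - gradient f (x i)‖ ^ 2 + r ^ 2)) := by
          apply Finset.sum_le_sum
          intro i hi
          exact hstep i (lt_of_lt_of_le (Finset.mem_range.mp hi) hJ)
      _ = 4 * η * (f (x 0) - f (x J)
            + η * ∑ i ∈ Finset.range J, ‖v i - gradient f (x i)‖ ^ 2
            + η * J * r ^ 2) := by
          rw [Finset.sum_add_distrib, ← Finset.mul_sum, htel, ← Finset.mul_sum,
            Finset.sum_add_distrib, Finset.sum_const, Finset.card_range]
          push_cast
          ring
  set A := f (x 0) - f (x J)
        + η * ∑ i ∈ Finset.range J, ‖v i - gradient f (x i)‖ ^ 2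
        + η * J * r ^ 2 with hA
  have hAnn : 0 ≤ A := by
    have h0 : (0:ℝ) ≤ ∑ i ∈ Finset.range J, ‖x (i + 1) - x i‖ ^ 2 :=
      Finset.sum_nonneg fun i _ => sq_nonneg _
    nlinarith
  -- telescoping norm + Cauchy-Schwarz
  have htel2 : ‖x J - x 0‖ ≤ ∑ i ∈ Finset.range J, ‖x (i + 1) - x i‖ := by
    have := dist_le_range_sum_dist x J
    rw [dist_comm] at this
    simpa [dist_eq_norm, norm_sub_rev] using this
  have hcs2 : (∑ i ∈ Finset.range J, ‖x (i + 1) - x i‖) ^ 2 ≤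
      J * ∑ i ∈ Finset.range J, ‖x (i + 1) - x i‖ ^ 2 := by
    have := sq_sum_le_card_mul_sum_sq (s := Finset.range J)
      (f := fun i => ‖x (i + 1) - x i‖)
    simpa [Finset.card_range] using this
  have h1 : ‖x J - x 0‖ ^ 2 ≤ J * ∑ i ∈ Finset.range J, ‖x (i + 1) - x i‖ ^ 2 :=
    le_trans (pow_le_pow_left₀ (norm_nonneg _) htel2 2) hcs2
  have hJnn : (0:ℝ) ≤ (J:ℝ) := Nat.cast_nonneg J
  calc ‖x J - x 0‖ ^ 2 ≤ J * ∑ i ∈ Finset.range J, ‖x (i + 1) - x i‖ ^ 2 := h1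
    _ ≤ J * (4 * η * A) := by
        apply mul_le_mul_of_nonneg_left hsum hJnn
    _ ≤ 8 * η * J * A := by nlinarith
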